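/- The raised Ricci-type d-tensor Sup^m_i := ((5 − 14δ^m_i)/4)·(1/√G)·(y_m/y_i) satisfies the two identities: (a) Σ_{m=1}^{4} Σ_{r=1}^{4} Sup^m_r·C^r_{im} = 0 for every i ∈ {1,2,3,4}; and (b) Σ_{m=1}^{4} ∂Sup^m_i/∂y_m = 3/(√G·y_i) for every i ∈ {1,2,3,4}. -/

import Mathlib

set_option maxHeartbeats 1600000


/-- Partial derivative of a function of `y : Fin 4 → ℝ` with respect to the
`k`-th component, evaluated at `y`. -/
noncomputable def pd (f : (Fin 4 → ℝ) → ℝ) (k : Fin 4) (y : Fin 4 → ℝ) : ℝ :=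
  deriv (fun s => f (Function.update y k s)) (y k)

lemma deriv1 (c b K x : ℝ) (hb : b ≠ 0) (hK : 0 < K) (hx : 0 < x) :
    deriv (fun s => c * (1 / Real.sqrt (s * K)) * (s / b)) x
      = c / (2 * Real.sqrt (x * K) * b) := by
  have hKs : Real.sqrt K ≠ 0 := (Real.sqrt_pos.mpr hK).ne'
  have hEq : (fun s => c * (1 / Real.sqrt (s * K)) * (s / b))
      =ᶠ[nhds x] fun s => c / (Real.sqrt K * b) * Real.sqrt s := by
    filter_upwards [isOpen_Ioi.mem_nhds hx] with s hs
    have hs0 : (0:ℝ) < s := hs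
    have hss : Real.sqrt s ≠ 0 := (Real.sqrt_pos.mpr hs0).ne'
    rw [Real.sqrt_mul hs0.le]
    set u := Real.sqrt s with hu
    have h1 : s = u ^ 2 := (Real.sq_sqrt hs0.le).symm
    rw [h1]
    field_simp
  rw [hEq.deriv_eq, ((Real.hasDerivAt_sqrt hx.ne').const_mul (c / (Real.sqrt K * b))).deriv,
    Real.sqrt_mul hx.le]
  have hxs : Real.sqrt x ≠ 0 := (Real.sqrt_pos.mpr hx).ne'
  rw [div_mul_div_comm, mul_one]
  ring_nf

lemma deriv2 (c K x : ℝ) (hK : 0 < K) (hx : 0 < x) :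
    deriv (fun s => c * (1 / Real.sqrt (s * K)) * (s / s)) x
      = -c / (2 * x * Real.sqrt (x * K)) := by
  have hxK : (0:ℝ) < x * K := mul_pos hx hK
  have hsq : Real.sqrt (x * K) ≠ 0 := (Real.sqrt_pos.mpr hxK).ne'
  have hEq : (fun s => c * (1 / Real.sqrt (s * K)) * (s / s))
      =ᶠ[nhds x] fun s => c * (Real.sqrt (s * K))⁻¹ := by
    filter_upwards [isOpen_Ioi.mem_nhds hx] with s hs
    have hs0 : (0:ℝ) < s := hs
    rw [div_self hs0.ne']
    ring
  have hlin : HasDerivAt (fun s : ℝ => s * K) K x := hasDerivAt_mul_const K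
  have hd : HasDerivAt (fun s => Real.sqrt (s * K)) (1 / (2 * Real.sqrt (x * K)) * K) x :=
    (Real.hasDerivAt_sqrt hxK.ne').comp x hlin
  have hd2 := (hd.inv hsq).const_mul c
  have hd3 : HasDerivAt (fun s => c * (Real.sqrt (s * K))⁻¹)
      (c * (-(1 / (2 * Real.sqrt (x * K)) * K) / Real.sqrt (x * K) ^ 2)) x := hd2
  rw [hEq.deriv_eq, hd3.deriv, Real.sq_sqrt hxK.le]
  field_simp

/-- The raised Ricci-type d-tensor
`Sup^m_i = ((5 − 14δ^m_i)/4)·(1/√G)·(y_m/y_i)` satisfies: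
(a) `Σ_{m,r} Sup^m_r·C^r_{im} = 0`; (b) `Σ_m ∂Sup^m_i/∂y_m = 3/(√G·y_i)`. -/
theorem berwald_moor_Sup_identities
    (y : Fin 4 → ℝ) (hy : ∀ i, 0 < y i)
    (A : Fin 4 → Fin 4 → Fin 4 → ℝ)
    (hA : ∀ i j k, A i j k =
      (2 * (if i = j then (1 : ℝ) else 0) + 2 * (if i = k then (1 : ℝ) else 0)
        + 2 * (if j = k then (1 : ℝ) else 0)
        - 8 * (if i = j then (1 : ℝ) else 0) * (if j = k then (1 : ℝ) else 0)
        - 1) / 8)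
    (C : Fin 4 → Fin 4 → Fin 4 → (Fin 4 → ℝ) → ℝ)
    (hC : ∀ i j k z, C i j k z = A i j k * z i / (z j * z k))
    (Sup : Fin 4 → Fin 4 → (Fin 4 → ℝ) → ℝ)
    (hSup : ∀ m i z, Sup m i z =
      ((5 - 14 * (if m = i then (1 : ℝ) else 0)) / 4)
        * (1 / Real.sqrt (∏ p, z p)) * (z m / z i)) :
    (∀ i, ∑ m, ∑ r, Sup m r y * C r i m y = 0) ∧
    (∀ i, ∑ m, pd (Sup m i) m y = 3 / (Real.sqrt (∏ p, y p) * y i)) := by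

  have hG : (0:ℝ) < ∏ p, y p := Finset.prod_pos (fun p _ => hy p)
  have hs : Real.sqrt (∏ p, y p) ≠ 0 := (Real.sqrt_pos.mpr hG).ne'
  have h0 := (hy 0).ne'
  have h1 := (hy 1).ne'
  have h2 := (hy 2).ne'
  have h3 := (hy 3).ne'
  have hterm : ∀ i m r, Sup m r y * C r i m y =
      ((5 - 14 * if m = r then (1:ℝ) else 0) / 4) * A r i m
        / (Real.sqrt (∏ p, y p) * y i) := by
    intro i m r
    have hm := (hy m).ne'
    have hr := (hy r).ne'
    have hi := (hy i).ne'
    rw [hSup, hC]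
    field_simp
  constructor
  · intro i
    have hyi := (hy i).ne'
    simp only [Fin.sum_univ_four, hterm]
    field_simp
    fin_cases i <;> simp [hA, Fin.ext_iff, show ((3:Fin 4) = 0) = False from by decide, show ((3:Fin 4) = 1) = False from by decide, show ((3:Fin 4) = 2) = False from by decide, show ((0:Fin 4) = 3) = False from by decide, show ((1:Fin 4) = 3) = False from by decide, show ((2:Fin 4) = 3) = False from by decide, show ((3:Fin 4) = 3) = True from by decide] <;> norm_num
  · intro i
    have key : ∀ m, pd (Sup m i) m y
        = (if m = i then (9:ℝ) else 5) / (8 * (Real.sqrt (∏ p, y p) * y i)) := by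
      intro m
      have hK : (0:ℝ) < ∏ p ∈ Finset.univ.erase m, y p :=
        Finset.prod_pos (fun p _ => hy p)
      have hprod : ∀ s : ℝ, (∏ p, Function.update y m s p)
          = s * ∏ p ∈ Finset.univ.erase m, y p := by
        intro s
        rw [Finset.prod_update_of_mem (Finset.mem_univ m),
          Finset.sdiff_singleton_eq_erase]
      have hG' : y m * ∏ p ∈ Finset.univ.erase m, y p = ∏ p, y p :=
        Finset.mul_prod_erase Finset.univ y (Finset.mem_univ m)
      by_cases h : m = i
      · subst h
        have hfun : (fun s => Sup m m (Function.update y m s))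
            = fun s => (-9/4 : ℝ) * (1 / Real.sqrt (s * ∏ p ∈ Finset.univ.erase m, y p))
                * (s / s) := by
          funext s
          rw [hSup, hprod s, Function.update_self]
          norm_num
        rw [pd, hfun, deriv2 _ _ _ hK (hy m), hG']
        simp only [if_pos rfl, ↓reduceIte]
        field_simp
        ring
      · have hfun : (fun s => Sup m i (Function.update y m s))
            = fun s => (5/4 : ℝ) * (1 / Real.sqrt (s * ∏ p ∈ Finset.univ.erase m, y p))
                * (s / y i) := by
          funext s
          rw [hSup, hprod s, Function.update_self, Function.update_of_ne (Ne.symm h)]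
          norm_num [h]
        rw [pd, hfun, deriv1 _ _ _ _ (hy i).ne' hK (hy m), hG']
        rw [if_neg h]
        field_simp
        ring
    have hyi := (hy i).ne'
    have hD : (8:ℝ) * (Real.sqrt (∏ p, y p) * y i) ≠ 0 := by positivity
    calc ∑ m, pd (Sup m i) m y
        = ∑ m : Fin 4, (if m = i then (9:ℝ) else 5)
            / (8 * (Real.sqrt (∏ p, y p) * y i)) :=
          Finset.sum_congr rfl (fun m _ => key m)
      _ = (∑ m : Fin 4, if m = i then (9:ℝ) else 5)
            / (8 * (Real.sqrt (∏ p, y p) * y i)) := by rw [Finset.sum_div]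
      _ = 24 / (8 * (Real.sqrt (∏ p, y p) * y i)) := by
          congr 1
          have h24 : ∀ m : Fin 4, (if m = i then (9:ℝ) else 5)
              = 5 + (if m = i then (4:ℝ) else 0) := fun m => by split_ifs <;> norm_num
          simp only [h24, Finset.sum_add_distrib, Finset.sum_ite_eq' Finset.univ i,
            Finset.mem_univ, if_pos, Finset.sum_const]
          norm_num
      _ = 3 / (Real.sqrt (∏ p, y p) * y i) := by
          rw [div_eq_div_iff hD (by positivity)]
          ring
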